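/- Under the stated hypotheses, the correction terms Λ_m satisfy Λ_m(t) ≥ 0 for all t ≥ T and all m, and for every m ≥ 1 and t ≥ T, |Λ_{m+1}(t) − Λ_m(t)| ≤ (t + m) / ∏_{j=1}^{m} Φ(t+j). -/

import Mathlib

open Filter

/-- The correction terms `Λ_m` built from `A` (the inverse of `g`) and the
auxiliary function `Φ`: `Λ_0 = 0` and `Λ_{m+1}(t) = A(Φ(t+1) + Λ_m(t+1)) − Φ(t)`. -/
noncomputable def LamSeq (A Φ : ℝ → ℝ) : ℕ → ℝ → ℝ
  | 0 => fun _ => 0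
  | m + 1 => fun t => A (Φ (t + 1) + LamSeq A Φ m (t + 1)) - Φ t

theorem LamSeq_nonneg_and_difference_bound
    (γ : ℝ) (hγ : 0 ≤ γ)
    (g : ℝ → ℝ) (hg_mono : StrictMono g) (hg_diff : Differentiable ℝ g)
    (hg_range : Set.range g = Set.Ioi γ)
    (hg_grow : ∀ x u : ℝ, 0 ≤ u → Real.exp u * g x ≤ g (x + u))
    (A : ℝ → ℝ)
    (hA_left : ∀ x : ℝ, A (g x) = x)
    (hA_right : ∀ s : ℝ, γ < s → g (A s) = s)
    (hA_diff : ∀ s : ℝ, γ < s → DifferentiableAt ℝ A s)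
    (hA_deriv : ∀ s : ℝ, γ < s → 0 < deriv A s ∧ deriv A s ≤ 1 / s)
    (T : ℝ) (hT : 0 < T)
    (Φ : ℝ → ℝ)
    (hΦeq : ∀ t : ℝ, T ≤ t → Φ (t + 1) = Real.exp t * g (Φ t))
    (hΦ1 : ∀ t : ℝ, T ≤ t → 1 < Φ t) :
    (∀ m : ℕ, ∀ t : ℝ, T ≤ t → 0 ≤ LamSeq A Φ m t) ∧
    (∀ m : ℕ, 1 ≤ m → ∀ t : ℝ, T ≤ t →
      |LamSeq A Φ (m + 1) t - LamSeq A Φ m t|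
        ≤ (t + m) / ∏ j ∈ Finset.Icc 1 m, Φ (t + j)) := by
  -- g takes values above γ
  have hgpos : ∀ x, γ < g x := by
    intro x
    have : g x ∈ Set.range g := ⟨x, rfl⟩
    rw [hg_range] at this
    exact this
  -- A is monotone on (γ, ∞)
  have hA_mono : ∀ s s' : ℝ, γ < s → s ≤ s' → A s ≤ A s' := by
    intro s s' hs hss
    have hs' : γ < s' := lt_of_lt_of_le hs hss
    rw [← hg_mono.le_iff_le, hA_right s hs, hA_right s' hs']
    exact hss
  -- g(Φ t) ≤ Φ (t+1) and Φ(t+1) > γ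
  have hgΦ : ∀ t, T ≤ t → g (Φ t) ≤ Φ (t + 1) := by
    intro t ht
    rw [hΦeq t ht]
    have h1 : (1:ℝ) ≤ Real.exp t := Real.one_le_exp (le_trans hT.le ht)
    nlinarith [hgpos (Φ t)]
  have hΦγ : ∀ t, T ≤ t → γ < Φ (t + 1) := fun t ht =>
    lt_of_lt_of_le (hgpos (Φ t)) (hgΦ t ht)
  -- nonnegativity
  have hnn : ∀ m, ∀ t, T ≤ t → 0 ≤ LamSeq A Φ m t := by
    intro m
    induction m with
    | zero => intro t _; simp [LamSeq]
    | succ m ih =>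
      intro t ht
      have ht1 : T ≤ t + 1 := by linarith
      have h1 : Φ (t+1) ≤ Φ (t+1) + LamSeq A Φ m (t+1) :=
        le_add_of_nonneg_right (ih _ ht1)
      have h2 : A (Φ (t+1)) ≤ A (Φ (t+1) + LamSeq A Φ m (t+1)) :=
        hA_mono _ _ (hΦγ t ht) h1
      have h3 : Φ t ≤ A (Φ (t+1)) := by
        calc Φ t = A (g (Φ t)) := (hA_left _).symm
          _ ≤ A (Φ (t+1)) := hA_mono _ _ (hgpos _) (hgΦ t ht)
      show 0 ≤ A (Φ (t + 1) + LamSeq A Φ m (t + 1)) - Φ t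
      linarith
  -- mean value estimate for A
  have hA_lip : ∀ a b : ℝ, γ < a → a ≤ b → A b - A a ≤ (b - a) / a := by
    intro a b ha hab
    have ha0 : 0 < a := lt_of_le_of_lt hγ ha
    rcases eq_or_lt_of_le hab with rfl | hlt
    · simp
    · have hcont : ContinuousOn A (Set.Icc a b) := fun s hs =>
        ((hA_diff s (lt_of_lt_of_le ha hs.1)).continuousAt).continuousWithinAt
      obtain ⟨c, hc, hceq⟩ := exists_deriv_eq_slope A hlt hcont
        (fun s hs => (hA_diff s (lt_trans ha hs.1)).differentiableWithinAt)
      have hcγ : γ < c := lt_trans ha hc.1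
      have hd := (hA_deriv c hcγ).2
      have h1 : (1:ℝ)/c ≤ 1/a := one_div_le_one_div_of_le ha0 hc.1.le
      have hba : 0 < b - a := sub_pos.mpr hlt
      have hd2 : deriv A c ≤ 1/a := le_trans hd h1
      rw [hceq] at hd2
      calc A b - A a = ((A b - A a) / (b - a)) * (b - a) := by field_simp
        _ ≤ (1/a) * (b - a) := mul_le_mul_of_nonneg_right hd2 hba.le
        _ = (b - a) / a := by ring
  -- two-sided Lipschitz-type bound
  have key : ∀ c x y : ℝ, γ < c → c ≤ x → c ≤ y → |A x - A y| ≤ |x - y| / c := by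
    have half : ∀ c x y : ℝ, γ < c → c ≤ x → c ≤ y → y ≤ x → A x - A y ≤ (x - y) / c := by
      intro c x y hc hcx hcy hyx
      have hyγ : γ < y := lt_of_lt_of_le hc hcy
      have h1 : A x - A y ≤ (x - y) / y := hA_lip y x hyγ hyx
      have hc0 : 0 < c := lt_of_le_of_lt hγ hc
      have h2 : (x - y)/y ≤ (x - y)/c := by
        gcongr
      linarith
    intro c x y hc hcx hcy
    rcases le_total y x with h | h
    · have h0 : 0 ≤ A x - A y := sub_nonneg.mpr (hA_mono y x (lt_of_lt_of_le hc hcy) h)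
      rw [abs_of_nonneg h0, abs_of_nonneg (sub_nonneg.mpr h)]
      exact half c x y hc hcx hcy h
    · have h0 : 0 ≤ A y - A x := sub_nonneg.mpr (hA_mono x y (lt_of_lt_of_le hc hcx) h)
      rw [abs_sub_comm, abs_sub_comm x y, abs_of_nonneg h0, abs_of_nonneg (sub_nonneg.mpr h)]
      exact half c y x hc hcy hcx h
  -- Λ₁(s) ≤ s
  have hΛ1 : ∀ s, T ≤ s → LamSeq A Φ 1 s ≤ s := by
    intro s hs
    have hs0 : 0 ≤ s := le_trans hT.le hs
    have h1 : Φ (s+1) ≤ g (Φ s + s) := by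
      rw [hΦeq s hs]
      exact hg_grow (Φ s) s hs0
    have h2 : A (Φ (s+1)) ≤ A (g (Φ s + s)) := hA_mono _ _ (hΦγ s hs) h1
    rw [hA_left] at h2
    show A (Φ (s + 1) + LamSeq A Φ 0 (s + 1)) - Φ s ≤ s
    rw [show LamSeq A Φ 0 (s+1) = 0 from rfl, add_zero]
    linarith
  -- product reindexing
  have hprodeq : ∀ (t:ℝ) (n:ℕ),
      (∏ j ∈ Finset.Icc 1 (n+1), Φ (t + j)) = Φ (t+1) * ∏ j ∈ Finset.Icc 1 n, Φ ((t+1) + j) := by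
    intro t n
    induction n with
    | zero => simp
    | succ n ih =>
      rw [Finset.prod_Icc_succ_top (by omega : 1 ≤ n + 1 + 1), ih,
        Finset.prod_Icc_succ_top (by omega : 1 ≤ n + 1), mul_assoc]
      congr 2
      push_cast
      ring_nf
  -- product positivity
  have hprodpos : ∀ (t:ℝ) (n:ℕ), T ≤ t → 0 < ∏ j ∈ Finset.Icc 1 n, Φ (t + j) := by
    intro t n ht
    apply Finset.prod_pos
    intro j hj
    have hj1 : 1 ≤ j := (Finset.mem_Icc.mp hj).1
    have hjr : (1:ℝ) ≤ j := by exact_mod_cast hj1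
    have : T ≤ t + j := by linarith
    linarith [hΦ1 _ this]
  -- main difference bound, shifted form
  have hbd : ∀ m : ℕ, ∀ t : ℝ, T ≤ t →
      |LamSeq A Φ (m+2) t - LamSeq A Φ (m+1) t|
        ≤ (t + (m:ℝ) + 1) / ∏ j ∈ Finset.Icc 1 (m+1), Φ (t + (j:ℝ)) := by
    intro m
    induction m with
    | zero =>
      intro t ht
      have ht1 : T ≤ t + 1 := by linarith
      have hdiff : LamSeq A Φ 2 t - LamSeq A Φ 1 t
          = A (Φ (t+1) + LamSeq A Φ 1 (t+1)) - A (Φ (t+1) + LamSeq A Φ 0 (t+1)) := by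
        show (A (Φ (t+1) + LamSeq A Φ 1 (t+1)) - Φ t) - (A (Φ (t+1) + LamSeq A Φ 0 (t+1)) - Φ t) = _
        ring
      have hk := key (Φ (t+1)) (Φ (t+1) + LamSeq A Φ 1 (t+1)) (Φ (t+1) + LamSeq A Φ 0 (t+1))
        (hΦγ t ht) (le_add_of_nonneg_right (hnn 1 _ ht1)) (le_add_of_nonneg_right (hnn 0 _ ht1))
      have hΛ1nn : 0 ≤ LamSeq A Φ 1 (t+1) := hnn 1 _ ht1
      have hΛ1le : LamSeq A Φ 1 (t+1) ≤ t + 1 := hΛ1 _ ht1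
      have heq : Φ (t+1) + LamSeq A Φ 1 (t+1) - (Φ (t+1) + LamSeq A Φ 0 (t+1))
          = LamSeq A Φ 1 (t+1) := by
        rw [show LamSeq A Φ 0 (t+1) = 0 from rfl]
        ring
      rw [heq, abs_of_nonneg hΛ1nn] at hk
      have hΦpos : 0 < Φ (t+1) := by linarith [hΦ1 _ ht1]
      have h2 : LamSeq A Φ 1 (t+1) / Φ (t+1) ≤ (t+1) / Φ (t+1) := by gcongr
      rw [hdiff]
      refine le_trans hk (le_trans h2 (le_of_eq ?_))
      rw [Finset.Icc_self, Finset.prod_singleton, Nat.cast_one, Nat.cast_zero]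
      ring_nf
    | succ m ih =>
      intro t ht
      have ht1 : T ≤ t + 1 := by linarith
      have hdiff : LamSeq A Φ (m+1+2) t - LamSeq A Φ (m+1+1) t
          = A (Φ (t+1) + LamSeq A Φ (m+1+1) (t+1)) - A (Φ (t+1) + LamSeq A Φ (m+1) (t+1)) := by
        show (A (Φ (t+1) + LamSeq A Φ (m+1+1) (t+1)) - Φ t)
            - (A (Φ (t+1) + LamSeq A Φ (m+1) (t+1)) - Φ t) = _
        ring
      have hk := key (Φ (t+1)) (Φ (t+1) + LamSeq A Φ (m+1+1) (t+1))
        (Φ (t+1) + LamSeq A Φ (m+1) (t+1))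
        (hΦγ t ht) (le_add_of_nonneg_right (hnn (m+1+1) _ ht1))
        (le_add_of_nonneg_right (hnn (m+1) _ ht1))
      have habs : |Φ (t+1) + LamSeq A Φ (m+1+1) (t+1) - (Φ (t+1) + LamSeq A Φ (m+1) (t+1))|
          = |LamSeq A Φ (m+1+1) (t+1) - LamSeq A Φ (m+1) (t+1)| := by
        congr 1; ring
      rw [habs] at hk
      have hΦpos : 0 < Φ (t+1) := by linarith [hΦ1 _ ht1]
      have hpp : 0 < ∏ j ∈ Finset.Icc 1 (m+1), Φ ((t+1) + (j:ℝ)) := hprodpos (t+1) (m+1) ht1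
      have hih := ih (t+1) ht1
      have h2 : |LamSeq A Φ (m+2) (t+1) - LamSeq A Φ (m+1) (t+1)| / Φ (t+1)
          ≤ ((t+1) + (m:ℝ) + 1) / (∏ j ∈ Finset.Icc 1 (m+1), Φ ((t+1) + (j:ℝ))) / Φ (t+1) := by
        gcongr
      rw [hdiff]
      refine le_trans hk (le_trans h2 (le_of_eq ?_))
      rw [hprodeq t (m+1), div_div, mul_comm (Φ (t+1))]
      congr 1
      push_cast
      ring
  refine ⟨hnn, ?_⟩
  intro m hm t ht
  obtain ⟨k, rfl⟩ := Nat.exists_eq_add_of_le hm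
  rw [Nat.add_comm 1 k]
  have := hbd k t ht
  convert this using 2
  push_cast
  ring
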